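/- Let (R, m) be a Noetherian local ring and M a finitely generated R-module. If N is a strongly irreducible submodule of M with Rad(N :_R M) = m, then N is sheltered: the set of submodules of M strictly containing N has a smallest element, namely (N :_M m). -/

import Mathlib

/-- The submodule (N : I) = {x in M | I • x ⊆ N}. -/
def Submodule.colonSubmodule {R : Type*} [CommRing R] {M : Type*} [AddCommGroup M]
    [Module R M] (N : Submodule R M) (I : Ideal R) : Submodule R M where
  carrier := {x | ∀ r ∈ I, r • x ∈ N}
  add_mem' := fun ha hb r hr => by
    simpa [smul_add] using N.add_mem (ha r hr) (hb r hr)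
  zero_mem' := fun r hr => by simpa using N.zero_mem
  smul_mem' := fun c x hx r hr => by
    rw [smul_comm]; exact N.smul_mem c (hx r hr)

theorem sheltered_of_strongly_irreducible
    {R : Type*} [CommRing R] [IsLocalRing R] [IsNoetherianRing R]
    {M : Type*} [AddCommGroup M] [Module R M] [Module.Finite R M]
    (N : Submodule R M)
    (hsi : ∀ K L : Submodule R M, K ⊓ L ≤ N → K ≤ N ∨ L ≤ N)
    (hrad : (N.colon ⊤).radical = IsLocalRing.maximalIdeal R) :
    IsLeast {L : Submodule R M | N < L}
      (N.colonSubmodule (IsLocalRing.maximalIdeal R)) := by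
  set m := IsLocalRing.maximalIdeal R with hm
  -- N is proper
  have hNproper : N ≠ ⊤ := by
    intro h
    have : (N.colon ⊤).radical = ⊤ := by
      have : N.colon ⊤ = ⊤ := by
        rw [eq_top_iff]
        intro r _
        rw [Submodule.mem_colon]
        intro p _
        rw [h]; trivial
      rw [this, Ideal.radical_top]
    rw [hrad] at this
    exact (IsLocalRing.maximalIdeal.isMaximal R).ne_top this
  -- m^n M ≤ N for some n
  have hfg : (N.colon ⊤).radical.FG := IsNoetherian.noetherian _
  obtain ⟨n, hn⟩ := Ideal.exists_radical_pow_le_of_fg (N.colon ⊤) hfg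
  rw [hrad] at hn
  have hpow : ∀ k, m ^ k ≤ N.colon ⊤ → (m ^ k) • (⊤ : Submodule R M) ≤ N := by
    intro k hk
    rw [Submodule.smul_le]
    intro r hr x hx
    exact (Submodule.mem_colon.mp (hk hr)) x hx
  have hP : ∃ k, (m ^ k) • (⊤ : Submodule R M) ≤ N := ⟨n, hpow n hn⟩
  classical
  let k := Nat.find hP
  have hk : (m ^ k) • (⊤ : Submodule R M) ≤ N := Nat.find_spec hP
  have hk0 : k ≠ 0 := by
    intro h
    have := hk
    rw [h, pow_zero, Ideal.one_eq_top, Submodule.top_smul] at this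
    exact hNproper (top_le_iff.mp this)
  have hkpred : ¬ (m ^ (k - 1)) • (⊤ : Submodule R M) ≤ N :=
    Nat.find_min hP (Nat.sub_lt (Nat.pos_of_ne_zero hk0) one_pos)
  obtain ⟨x, hxmem, hxN⟩ := SetLike.not_le_iff_exists.mp hkpred
  -- key: m • x ⊆ N, i.e. x ∈ colonSubmodule
  have hxcol : x ∈ N.colonSubmodule m := by
    intro r hr
    have : r • x ∈ m • ((m ^ (k - 1)) • (⊤ : Submodule R M)) :=
      Submodule.smul_mem_smul hr hxmem
    rw [← mul_smul, ← pow_succ', Nat.sub_add_cancel (Nat.one_le_iff_ne_zero.mpr hk0)] at this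
    exact hk this
  -- N ≤ colonSubmodule
  have hle : N ≤ N.colonSubmodule m := fun y hy r _ => N.smul_mem r hy
  constructor
  · exact lt_of_le_of_ne hle (fun h => hxN (h ▸ hxcol))
  · intro L hL
    intro z hz
    by_contra hzL
    -- consider K = N ⊔ span {z}
    have hKL : (N ⊔ Submodule.span R {z}) ⊓ L ≤ N := by
      rintro w ⟨hwK, hwL⟩
      obtain ⟨a, ha, b, hb, rfl⟩ := Submodule.mem_sup.mp hwK
      obtain ⟨r, rfl⟩ := Submodule.mem_span_singleton.mp hb
      by_cases hr : r ∈ m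
      · exact N.add_mem ha (hz r hr)
      · exfalso
        have hru : IsUnit r := by
          by_contra h
          exact hr ((IsLocalRing.mem_maximalIdeal r).mpr h)
        have : r • z ∈ L := by
          have : r • z = (a + r • z) - a := by abel
          rw [this]
          exact L.sub_mem hwL ((show N < L from hL).le ha)
        obtain ⟨u, hu⟩ := hru
        have : z ∈ L := by
          have := L.smul_mem (↑u⁻¹ : R) this
          rwa [← hu, smul_smul, Units.inv_mul, one_smul] at this
        exact hzL this
    rcases hsi _ _ hKL with h | h
    · exact hzL ((show N < L from hL).le (h (Submodule.mem_sup_right (Submodule.mem_span_singleton_self z))))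
    · exact absurd h (not_le_of_gt (show N < L from hL))
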